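/- Let p > 3 be a prime, θ a nontrivial additive character of F_p with values in ℂ, and λ ∈ F_p with λ ∉ {0, 1, −1}. Then (φ(−1)·g(φ)/(p−1)) · Σ_χ g(χ⁻¹)·g(χ²)·g(χ⁻¹·φ)·χ⁻¹(4λ²) = −2p, where the sum runs over all multiplicative characters χ of F_p. -/

import Mathlib

open Finset


private lemma qcore (p : ℕ) [Fact p.Prime] (hp2 : ringChar (ZMod p) ≠ 2) (d : ZMod p) (hd : d ≠ 0) :
    ∑ s : ZMod p, quadraticChar (ZMod p) (s ^ 2 + d) = -1 := by
  classical
  have h1 : ∑ s : ZMod p, quadraticChar (ZMod p) (s ^ 2 + d)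
      = ∑ u : ZMod p, ∑ s ∈ univ.filter (fun s : ZMod p => s ^ 2 = u),
          quadraticChar (ZMod p) (s ^ 2 + d) :=
    (Finset.sum_fiberwise_of_maps_to (fun a _ => mem_univ _) _).symm
  have h2 : ∀ u : ZMod p, ∑ s ∈ univ.filter (fun s : ZMod p => s ^ 2 = u),
      quadraticChar (ZMod p) (s ^ 2 + d)
      = (quadraticChar (ZMod p) u + 1) * quadraticChar (ZMod p) (u + d) := by
    intro u
    rw [Finset.sum_congr rfl (fun s hs => by
      rw [(Finset.mem_filter.mp hs).2]), Finset.sum_const, nsmul_eq_mul]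
    congr 1
    rw [← quadraticChar_card_sqrts hp2 u, Set.toFinset_setOf]
  rw [h1]
  simp_rw [h2, add_mul, one_mul]
  rw [Finset.sum_add_distrib]
  have h3 : ∑ u : ZMod p, quadraticChar (ZMod p) (u + d) = 0 := by
    exact (Equiv.sum_comp (Equiv.addRight d) (quadraticChar (ZMod p))).trans
      (quadraticChar_sum_zero hp2)
  rw [h3, add_zero]
  -- now ∑ u, qc u * qc (u + d) = -1
  have h4 : ∑ u : ZMod p, quadraticChar (ZMod p) u * quadraticChar (ZMod p) (u + d)
      = ∑ u ∈ univ.filter (fun u : ZMod p => u ≠ 0), quadraticChar (ZMod p) (1 + d * u⁻¹) := by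
    rw [← Finset.sum_filter_of_ne (p := fun u : ZMod p => u ≠ 0)
      (fun u _ h hu => by simp [hu, MulChar.map_zero] at h)]
    refine Finset.sum_congr rfl fun u hu => ?_
    have hu0 : u ≠ 0 := (Finset.mem_filter.mp hu).2
    rw [← map_mul]
    have : u * (u + d) = u ^ 2 * (1 + d * u⁻¹) := by field_simp
    rw [this, map_mul, quadraticChar_sq_one' hu0, one_mul]
  rw [h4]
  have h5 : ∑ u ∈ univ.filter (fun u : ZMod p => u ≠ 0), quadraticChar (ZMod p) (1 + d * u⁻¹)
      = ∑ v ∈ univ.filter (fun v : ZMod p => v ≠ 1), quadraticChar (ZMod p) v := by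
    refine Finset.sum_nbij' (fun u => 1 + d * u⁻¹) (fun v => d * (v - 1)⁻¹) ?_ ?_ ?_ ?_ ?_
    · intro u hu
      have hu0 : u ≠ 0 := (Finset.mem_filter.mp hu).2
      simp only [mem_filter, mem_univ, true_and]
      intro h
      have : d * u⁻¹ = 0 := by linear_combination h
      exact hd (by simpa [inv_eq_zero, hu0] using this)
    · intro v hv
      have hv1 : v ≠ 1 := (Finset.mem_filter.mp hv).2
      simp only [mem_filter, mem_univ, true_and]
      exact mul_ne_zero hd (inv_ne_zero (sub_ne_zero.mpr hv1))
    · intro u hu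
      have hu0 : u ≠ 0 := (Finset.mem_filter.mp hu).2
      field_simp
      simp [hd]
    · intro v hv
      have hv1 : v ≠ 1 := (Finset.mem_filter.mp hv).2
      have : v - 1 ≠ 0 := sub_ne_zero.mpr hv1
      field_simp
      ring
    · intro u hu; rfl
  rw [h5]
  have h6 := Finset.sum_filter_add_sum_filter_not univ (fun v : ZMod p => v = 1)
    (quadraticChar (ZMod p))
  rw [quadraticChar_sum_zero hp2] at h6
  have h7 : ∑ v ∈ univ.filter (fun v : ZMod p => v = 1), quadraticChar (ZMod p) v = 1 := by
    rw [Finset.filter_eq']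
    simp
  simp only [ne_eq]
  linarith [h6, h7]


private lemma qsum (p : ℕ) [Fact p.Prime] (hp2 : ringChar (ZMod p) ≠ 2)
    (l : ZMod p) (hl1 : l ≠ 1) (hlm1 : l ≠ -1) :
    ∑ t : ZMod p, quadraticChar (ZMod p) (t ^ 2 + 2 * l * t + 1) = -1 := by
  have hd : (1 : ZMod p) - l ^ 2 ≠ 0 := by
    intro h
    have : (1 - l) * (1 + l) = 0 := by linear_combination h
    rcases mul_eq_zero.mp this with h' | h'
    · exact hl1 (by linear_combination -h')
    · exact hlm1 (by linear_combination h')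
  calc ∑ t : ZMod p, quadraticChar (ZMod p) (t ^ 2 + 2 * l * t + 1)
      = ∑ t : ZMod p, quadraticChar (ZMod p) ((t + l) ^ 2 + (1 - l ^ 2)) :=
        Finset.sum_congr rfl fun t _ => by rw [show t ^ 2 + 2 * l * t + 1
          = (t + l) ^ 2 + (1 - l ^ 2) by ring]
    _ = ∑ s : ZMod p, quadraticChar (ZMod p) (s ^ 2 + (1 - l ^ 2)) :=
        Equiv.sum_comp (Equiv.addRight l) (fun s => quadraticChar (ZMod p) (s ^ 2 + (1 - l ^ 2)))
    _ = -1 := qcore p hp2 _ hd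


private lemma orth (p : ℕ) [Fact p.Prime] (a : ZMod p) :
    ∑ χ : MulChar (ZMod p) ℂ, χ a = if a = 1 then ((p:ℂ)-1) else 0 := by
  haveI : NeZero p := ⟨(Fact.out (p := p.Prime)).ne_zero⟩
  have h := DirichletCharacter.sum_characters_eq (R := ℂ) (n := p) a
  rw [h, Nat.totient_prime Fact.out]
  split_ifs <;> push_cast [Nat.cast_sub (Fact.out (p := p.Prime)).one_lt.le] <;> ring

private lemma zsum (p : ℕ) [Fact p.Prime] (θ : AddChar (ZMod p) ℂ)
    (φ : MulChar (ZMod p) ℂ) (hφ1 : φ ≠ 1)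
    (hsq : ∀ u : ZMod p, u ≠ 0 → φ u * φ u = 1) (u : ZMod p) :
    ∑ z : ZMod p, φ z * θ (z * u) = φ u * gaussSum φ θ := by
  by_cases hu : u = 0
  · simp only [hu, mul_zero, AddChar.map_zero_eq_one, mul_one, MulChar.map_zero, zero_mul]
    exact φ.sum_eq_zero_of_ne_one hφ1
  · have h1 := gaussSum_mulShift φ θ (Units.mk0 u hu)
    simp only [Units.val_mk0] at h1
    have h2 : φ u * (φ u * gaussSum φ (AddChar.mulShift θ u)) = φ u * gaussSum φ θ := by
      rw [h1]
    rw [← mul_assoc, hsq u hu, one_mul] at h2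
    rw [← h2]
    unfold gaussSum
    exact Finset.sum_congr rfl fun z _ => by simp [AddChar.mulShift_apply, mul_comm]

private lemma key (p : ℕ) [Fact p.Prime] (θ : AddChar (ZMod p) ℂ)
    (φ : MulChar (ZMod p) ℂ) (hφ1 : φ ≠ 1)
    (hsq : ∀ u : ZMod p, u ≠ 0 → φ u * φ u = 1)
    (l : ZMod p) (hl0 : l ≠ 0) (h2 : (2 : ZMod p) ≠ 0) :
    ∑ χ : MulChar (ZMod p) ℂ,
      gaussSum χ⁻¹ θ * gaussSum (χ ^ 2) θ * gaussSum (χ⁻¹ * φ) θ * χ⁻¹ (4 * l ^ 2)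
    = ((p : ℂ) - 1) *
      ((∑ t ∈ univ.filter (fun t : ZMod p => t ≠ 0), φ (t ^ 2 + 2 * l * t + 1)) *
        gaussSum φ θ) := by
  classical
  have h4 : (4 * l ^ 2 : ZMod p) ≠ 0 := by
    have h44 : (4 : ZMod p) = 2 * 2 := by norm_num
    exact mul_ne_zero (h44 ▸ mul_ne_zero h2 h2) (pow_ne_zero 2 hl0)
  -- Step 1: expand the Gauss sums
  have e1 : ∀ χ : MulChar (ZMod p) ℂ,
      gaussSum χ⁻¹ θ * gaussSum (χ ^ 2) θ * gaussSum (χ⁻¹ * φ) θ * χ⁻¹ (4 * l ^ 2)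
      = ∑ z : ZMod p, ∑ y : ZMod p, ∑ x : ZMod p,
          χ (x⁻¹ * y ^ 2 * z⁻¹ * (4 * l ^ 2)⁻¹) * (φ z * (θ x * θ y * θ z)) := by
    intro χ
    simp only [gaussSum, Finset.sum_mul, Finset.mul_sum]
    refine Finset.sum_congr rfl fun z _ => Finset.sum_congr rfl fun y _ =>
      Finset.sum_congr rfl fun x _ => ?_
    simp only [MulChar.inv_apply', MulChar.mul_apply,
      MulChar.pow_apply' χ (by norm_num : (2:ℕ) ≠ 0), map_mul, map_pow, mul_inv, ← inv_pow]
    ring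
  rw [Finset.sum_congr rfl fun χ _ => e1 χ]
  -- Step 2: move the χ-sum inside and apply orthogonality
  rw [Finset.sum_comm]
  have e2 : ∀ z : ZMod p, ∑ χ : MulChar (ZMod p) ℂ, ∑ y : ZMod p, ∑ x : ZMod p,
      χ (x⁻¹ * y ^ 2 * z⁻¹ * (4 * l ^ 2)⁻¹) * (φ z * (θ x * θ y * θ z))
      = ∑ y : ZMod p, ∑ x : ZMod p,
          (if x⁻¹ * y ^ 2 * z⁻¹ * (4 * l ^ 2)⁻¹ = 1 then ((p:ℂ)-1) else 0)
            * (φ z * (θ x * θ y * θ z)) := by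
    intro z
    rw [Finset.sum_comm]
    refine Finset.sum_congr rfl fun y _ => ?_
    rw [Finset.sum_comm]
    refine Finset.sum_congr rfl fun x _ => ?_
    rw [← Finset.sum_mul, orth]
  rw [Finset.sum_congr rfl fun z _ => e2 z]
  -- Step 3: evaluate the x-sum
  have e3 : ∀ z y : ZMod p, ∑ x : ZMod p,
      (if x⁻¹ * y ^ 2 * z⁻¹ * (4 * l ^ 2)⁻¹ = 1 then ((p:ℂ)-1) else 0)
        * (φ z * (θ x * θ y * θ z))
      = if y ≠ 0 ∧ z ≠ 0 then
          ((p:ℂ)-1) * (φ z * θ (y ^ 2 * z⁻¹ * (4 * l ^ 2)⁻¹ + y + z)) else 0 := by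
    intro z y
    by_cases hy : y = 0
    · simp [hy]
    by_cases hz : z = 0
    · simp [hz]
    have hd : y ^ 2 * z⁻¹ * (4 * l ^ 2)⁻¹ ≠ 0 :=
      mul_ne_zero (mul_ne_zero (pow_ne_zero 2 hy) (inv_ne_zero hz)) (inv_ne_zero h4)
    have hcond : ∀ x : ZMod p, (x⁻¹ * y ^ 2 * z⁻¹ * (4 * l ^ 2)⁻¹ = 1)
        ↔ x = y ^ 2 * z⁻¹ * (4 * l ^ 2)⁻¹ := by
      intro x
      rcases eq_or_ne x 0 with rfl | hx
      · simp only [inv_zero, zero_mul]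
        exact iff_of_false zero_ne_one (fun h => hd h.symm)
      · constructor
        · intro h
          calc x = x * (x⁻¹ * y ^ 2 * z⁻¹ * (4 * l ^ 2)⁻¹) := by rw [h, mul_one]
            _ = (x * x⁻¹) * (y ^ 2 * z⁻¹ * (4 * l ^ 2)⁻¹) := by ring
            _ = y ^ 2 * z⁻¹ * (4 * l ^ 2)⁻¹ := by rw [mul_inv_cancel₀ hx, one_mul]
        · rintro rfl
          field_simp
          exact div_self (left_ne_zero_of_mul h4)
    simp only [hcond]
    rw [if_pos ⟨hy, hz⟩]
    rw [Finset.sum_congr rfl fun x _ => (ite_mul _ _ _ _ : _ = _)]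
    simp only [zero_mul]
    rw [Finset.sum_ite_eq' univ (y ^ 2 * z⁻¹ * (4 * l ^ 2)⁻¹)]
    simp only [mem_univ, if_true]
    rw [AddChar.map_add_eq_mul, AddChar.map_add_eq_mul]
  rw [Finset.sum_congr rfl fun z _ => Finset.sum_congr rfl fun y _ => e3 z y]
  -- Step 4: restrict to nonzero y, z
  have e4 : ∑ z : ZMod p, ∑ y : ZMod p,
      (if y ≠ 0 ∧ z ≠ 0 then
        ((p:ℂ)-1) * (φ z * θ (y ^ 2 * z⁻¹ * (4 * l ^ 2)⁻¹ + y + z)) else 0)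
      = ∑ z ∈ univ.filter (fun z : ZMod p => z ≠ 0),
          ∑ y ∈ univ.filter (fun y : ZMod p => y ≠ 0),
          ((p:ℂ)-1) * (φ z * θ (y ^ 2 * z⁻¹ * (4 * l ^ 2)⁻¹ + y + z)) := by
    rw [Finset.sum_filter]
    refine Finset.sum_congr rfl fun z _ => ?_
    by_cases hz : z = 0
    · simp [hz]
    · simp only [hz, not_false_iff, if_true, ne_eq]
      rw [Finset.sum_filter]
      refine Finset.sum_congr rfl fun y _ => ?_
      by_cases hy : y = 0 <;> simp [hy, hz]
  rw [e4]
  -- Step 5: substitution y = 2 l z t in the inner sum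
  have e5 : ∀ z : ZMod p, z ≠ 0 →
      ∑ y ∈ univ.filter (fun y : ZMod p => y ≠ 0),
        ((p:ℂ)-1) * (φ z * θ (y ^ 2 * z⁻¹ * (4 * l ^ 2)⁻¹ + y + z))
      = ∑ t ∈ univ.filter (fun t : ZMod p => t ≠ 0),
        ((p:ℂ)-1) * (φ z * θ (z * (t ^ 2 + 2 * l * t + 1))) := by
    intro z hz
    have h2lz : (2 * l * z : ZMod p) ≠ 0 := mul_ne_zero (mul_ne_zero h2 hl0) hz
    refine Finset.sum_nbij' (fun y => (2 * l * z)⁻¹ * y) (fun t => 2 * l * z * t)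
      ?_ ?_ ?_ ?_ ?_
    · intro y hy
      simp only [mem_filter, mem_univ, true_and] at hy ⊢
      exact mul_ne_zero (inv_ne_zero h2lz) hy
    · intro t ht
      simp only [mem_filter, mem_univ, true_and] at ht ⊢
      exact mul_ne_zero h2lz ht
    · intro y _
      field_simp
    · intro t _
      field_simp
    · intro y hy
      simp only [mem_filter, mem_univ, true_and] at hy
      refine congrArg (fun w => ((p:ℂ)-1) * (φ z * θ w)) ?_
      field_simp
      ring_nf
      rw [inv_mul_cancel_right₀ (left_ne_zero_of_mul h4)]
  rw [Finset.sum_congr rfl fun z hz => e5 z (Finset.mem_filter.mp hz).2]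
  -- Step 6: swap sums and evaluate the z-sum
  rw [Finset.sum_comm]
  have e6 : ∀ t : ZMod p, t ≠ 0 →
      ∑ z ∈ univ.filter (fun z : ZMod p => z ≠ 0),
        ((p:ℂ)-1) * (φ z * θ (z * (t ^ 2 + 2 * l * t + 1)))
      = ((p:ℂ)-1) * (φ (t ^ 2 + 2 * l * t + 1) * gaussSum φ θ) := by
    intro t _
    rw [Finset.sum_filter_of_ne (fun z _ h => by
      rintro rfl
      exact h (by simp [MulChar.map_zero]))]
    rw [← Finset.mul_sum, ← zsum p θ φ hφ1 hsq (t ^ 2 + 2 * l * t + 1)]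
  rw [Finset.sum_congr rfl fun t ht => e6 t (Finset.mem_filter.mp ht).2]
  rw [Finset.sum_mul, Finset.mul_sum]

theorem gauss_sum_A1 (p : ℕ) [Fact p.Prime] (hp : 3 < p)
    (θ : AddChar (ZMod p) ℂ) (hθ : θ ≠ 1)
    (l : ZMod p) (hl0 : l ≠ 0) (hl1 : l ≠ 1) (hlm1 : l ≠ -1) :
    letI φ : MulChar (ZMod p) ℂ := (quadraticChar (ZMod p)).ringHomComp (Int.castRingHom ℂ)
    (φ (-1) * gaussSum φ θ / ((p : ℂ) - 1)) *
        ∑ᶠ χ : MulChar (ZMod p) ℂ,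
          gaussSum χ⁻¹ θ * gaussSum (χ ^ 2) θ * gaussSum (χ⁻¹ * φ) θ * χ⁻¹ (4 * l ^ 2) =
      -2 * (p : ℂ) := by
  set φ : MulChar (ZMod p) ℂ := (quadraticChar (ZMod p)).ringHomComp (Int.castRingHom ℂ)
    with hφdef
  haveI : NeZero p := ⟨(Fact.out (p := p.Prime)).ne_zero⟩
  have hp2 : ringChar (ZMod p) ≠ 2 := by
    rw [ZMod.ringChar_zmod_n]; omega
  have h2 : (2 : ZMod p) ≠ 0 := by
    intro h
    rw [show ((2 : ZMod p)) = ((2 : ℕ) : ZMod p) by norm_num,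
      ZMod.natCast_eq_zero_iff] at h
    have := Nat.le_of_dvd (by norm_num) h
    omega
  have hφ1 : φ ≠ 1 :=
    (MulChar.ringHomComp_ne_one_iff (RingHom.injective_int _)).mpr (quadraticChar_ne_one hp2)
  have hquad : φ.IsQuadratic := (quadraticChar_isQuadratic (ZMod p)).comp _
  have hsq : ∀ u : ZMod p, u ≠ 0 → φ u * φ u = 1 := by
    intro u hu
    have h1 : φ u * φ u = ((((quadraticChar (ZMod p)) u * (quadraticChar (ZMod p)) u : ℤ)) : ℂ) := by
      push_cast
      rfl
    rw [h1, ← sq, quadraticChar_sq_one hu]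
    norm_num
  have hprim : θ.IsPrimitive := AddChar.IsPrimitive.of_ne_one hθ
  have hgs : gaussSum φ θ ^ 2 = φ (-1) * (p : ℂ) := by
    have := gaussSum_sq hφ1 hquad hprim
    rwa [ZMod.card p] at this
  have hm1 : φ (-1) * φ (-1) = 1 := hsq (-1) (neg_ne_zero.mpr one_ne_zero)
  have hP : ((p : ℂ) - 1) ≠ 0 := by
    rw [sub_ne_zero]
    intro h
    rw [show (1 : ℂ) = ((1 : ℕ) : ℂ) by norm_num, Nat.cast_inj] at h
    omega
  -- the quadratic sum
  have hQC : ∑ t : ZMod p, φ (t ^ 2 + 2 * l * t + 1) = -1 := by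
    have h1 : ∑ t : ZMod p, φ (t ^ 2 + 2 * l * t + 1)
        = ((∑ t : ZMod p, quadraticChar (ZMod p) (t ^ 2 + 2 * l * t + 1) : ℤ) : ℂ) := by
      push_cast
      rfl
    rw [h1, qsum p hp2 l hl1 hlm1]
    norm_num
  have hfil : ∑ t ∈ univ.filter (fun t : ZMod p => t ≠ 0), φ (t ^ 2 + 2 * l * t + 1)
      = -2 := by
    have h0 : φ ((0 : ZMod p) ^ 2 + 2 * l * 0 + 1) = 1 := by
      norm_num
    have hadd := Finset.add_sum_erase univ (fun t : ZMod p => φ (t ^ 2 + 2 * l * t + 1))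
      (Finset.mem_univ 0)
    rw [Finset.filter_ne']
    rw [h0] at hadd
    rw [hQC] at hadd
    linear_combination hadd
  have hfin : (∑ᶠ χ : MulChar (ZMod p) ℂ,
      gaussSum χ⁻¹ θ * gaussSum (χ ^ 2) θ * gaussSum (χ⁻¹ * φ) θ * χ⁻¹ (4 * l ^ 2))
      = ∑ χ : MulChar (ZMod p) ℂ,
      gaussSum χ⁻¹ θ * gaussSum (χ ^ 2) θ * gaussSum (χ⁻¹ * φ) θ * χ⁻¹ (4 * l ^ 2) :=
    finsum_eq_sum_of_fintype _
  rw [hfin, key p θ φ hφ1 hsq l hl0 h2, hfil]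
  calc φ (-1) * gaussSum φ θ / ((p : ℂ) - 1) * (((p : ℂ) - 1) * (-2 * gaussSum φ θ))
      = (φ (-1) * gaussSum φ θ ^ 2) * (-2) * (((p : ℂ) - 1) / ((p : ℂ) - 1)) := by ring
    _ = (φ (-1) * gaussSum φ θ ^ 2) * (-2) := by rw [div_self hP, mul_one]
    _ = -2 * (p : ℂ) := by
        rw [hgs, ← mul_assoc, hm1, one_mul]
        ring
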